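/- Let f be a homeomorphism of a compact metrizable space X and k a positive integer. If f is pointwise almost periodic, then f^k is pointwise almost periodic. -/

import Mathlib

open Topology Filter Set

/-- The ℤ-orbit of a point under a bijection. -/
def orbitE {X : Type*} (e : Equiv.Perm X) (x : X) : Set X :=
  Set.range fun n : ℤ => (e ^ n) x

/-- A homeomorphism is R-closed if the orbit-closure relation is closed. -/
def RClosed {X : Type*} [TopologicalSpace X] (f : X ≃ₜ X) : Prop :=
  IsClosed {p : X × X | p.2 ∈ closure (orbitE f.toEquiv p.1)}

/-- A set of integers is syndetic. -/
def IsSyndetic (S : Set ℤ) : Prop :=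
  ∃ K : ℕ, ∀ n : ℤ, ∃ m ∈ S, n ≤ m ∧ m ≤ n + K

/-- A point is almost periodic for a bijection of a topological space. -/
def AlmostPeriodicPt {X : Type*} [TopologicalSpace X] (e : Equiv.Perm X) (x : X) : Prop :=
  ∀ U : Set X, IsOpen U → x ∈ U → IsSyndetic {n : ℤ | (e ^ n) x ∈ U}

section Aux

variable {X : Type*} [TopologicalSpace X]

private lemma cont_zpow (f : X ≃ₜ X) (n : ℤ) : Continuous fun y : X => (f.toEquiv ^ n) y := by
  induction n using Int.induction_on with
  | zero => simpa using continuous_id'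
  | succ m ih =>
      have : ∀ y : X, (f.toEquiv ^ ((m : ℤ) + 1)) y = (f.toEquiv ^ (m : ℤ)) (f y) := by
        intro y
        rw [zpow_add, zpow_one, Equiv.Perm.mul_apply]
        rfl
      simpa only [this, Function.comp_def] using ih.comp f.continuous
  | pred m ih =>
      have : ∀ y : X, (f.toEquiv ^ (-(m : ℤ) - 1)) y = (f.toEquiv ^ (-(m : ℤ))) (f.symm y) := by
        intro y
        have : f.toEquiv ^ (-(m : ℤ) - 1) = f.toEquiv ^ (-(m : ℤ)) * (f.toEquiv)⁻¹ := by
          rw [← zpow_neg_one, ← zpow_add]; ring_nf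
        rw [this, Equiv.Perm.mul_apply]; rfl
      simpa only [this, Function.comp_def] using ih.comp f.symm.continuous

/-- integer power of a homeomorphism, as a homeomorphism -/
private def zpowH (f : X ≃ₜ X) (n : ℤ) : X ≃ₜ X where
  toEquiv := f.toEquiv ^ n
  continuous_toFun := cont_zpow f n
  continuous_invFun := by
    have h : ∀ y, (f.toEquiv ^ n).symm y = (f.toEquiv ^ (-n)) y := by
      intro y
      rw [zpow_neg]
      rfl
    simpa only [Equiv.invFun_as_coe, funext h] using cont_zpow f (-n)

@[simp] private lemma zpowH_apply (f : X ≃ₜ X) (n : ℤ) (y : X) :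
    zpowH f n y = (f.toEquiv ^ n) y := rfl

omit [TopologicalSpace X] in
private lemma mem_orbitE {e : Equiv.Perm X} (n : ℤ) (x : X) : (e ^ n) x ∈ orbitE e x := ⟨n, rfl⟩

omit [TopologicalSpace X] in
private lemma self_mem_orbitE {e : Equiv.Perm X} (x : X) : x ∈ orbitE e x := by
  have := mem_orbitE (e := e) 0 x
  simpa using this

private lemma zpow_mem_closure_orbitE (h : X ≃ₜ X) {y z : X} (n : ℤ)
    (hz : z ∈ closure (orbitE h.toEquiv y)) :
    (h.toEquiv ^ n) z ∈ closure (orbitE h.toEquiv y) := by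
  have himg : zpowH h n '' closure (orbitE h.toEquiv y)
      ⊆ closure (orbitE h.toEquiv y) := by
    rw [Homeomorph.image_closure]
    refine closure_mono ?_
    rintro _ ⟨_, ⟨m, rfl⟩, rfl⟩
    refine ⟨n + m, ?_⟩
    show (h.toEquiv ^ (n + m)) y = (zpowH h n) ((h.toEquiv ^ m) y)
    rw [zpowH_apply, zpow_add, Equiv.Perm.mul_apply]
  exact himg ⟨z, hz, rfl⟩

private lemma closure_orbitE_subset (h : X ≃ₜ X) {y : X} {A : Set X} (hA : IsClosed A)
    (hinv : ∀ z ∈ A, ∀ n : ℤ, (h.toEquiv ^ n) z ∈ A) (hy : y ∈ A) :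
    closure (orbitE h.toEquiv y) ⊆ A := by
  refine closure_minimal ?_ hA
  rintro _ ⟨n, rfl⟩
  exact hinv y hy n

/-- the collection of nonempty closed invariant subsets of `M`. -/
private def invSets (h : X ≃ₜ X) (M : Set X) : Set (Set X) :=
  {A | A ⊆ M ∧ A.Nonempty ∧ IsClosed A ∧ ∀ z ∈ A, ∀ n : ℤ, (h.toEquiv ^ n) z ∈ A}

private lemma exists_minimal_invSet [CompactSpace X] (h : X ≃ₜ X) (x : X) :
    ∃ N, Minimal (· ∈ invSets h (closure (orbitE h.toEquiv x))) N := by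
  set M := closure (orbitE h.toEquiv x) with hM
  have hMmem : M ∈ invSets h M := by
    refine ⟨le_refl _, ⟨x, subset_closure (self_mem_orbitE x)⟩, isClosed_closure, ?_⟩
    intro z hz n
    exact zpow_mem_closure_orbitE h n hz
  have hchainc : ∀ c ⊆ invSets h M, IsChain (· ⊆ ·) c → c.Nonempty →
      ∃ lb ∈ invSets h M, ∀ s ∈ c, lb ⊆ s := by
    intro c hcS hchain hcne
    refine ⟨⋂₀ c, ⟨?_, ?_, ?_, ?_⟩, fun s hs => sInter_subset_of_mem hs⟩
    · obtain ⟨s, hs⟩ := hcne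
      exact (sInter_subset_of_mem hs).trans (hcS hs).1
    · haveI : Nonempty c := hcne.to_subtype
      refine IsCompact.nonempty_sInter_of_directed_nonempty_isCompact_isClosed ?_
        (fun U hU => (hcS hU).2.1) (fun U hU => (hcS hU).2.2.1.isCompact)
        (fun U hU => (hcS hU).2.2.1)
      intro a ha b hb
      rcases hchain.total ha hb with hab | hba
      · exact ⟨a, ha, le_refl _, hab⟩
      · exact ⟨b, hb, hba, le_refl _⟩
    · exact isClosed_sInter fun U hU => (hcS hU).2.2.1
    · intro z hz n
      exact fun U hU => (hcS hU).2.2.2 z (hz U hU) n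
  obtain ⟨N, -, hN⟩ := zorn_superset_nonempty (invSets h M) hchainc M hMmem
  exact ⟨N, hN⟩

private lemma mem_closure_orbit_of_ap [TopologicalSpace.MetrizableSpace X] (f : X ≃ₜ X) {x y : X}
    (hx : AlmostPeriodicPt f.toEquiv x) (hy : y ∈ closure (orbitE f.toEquiv x)) :
    x ∈ closure (orbitE f.toEquiv y) := by
  letI : MetricSpace X := TopologicalSpace.metrizableSpaceMetric X
  rw [mem_closure_iff]
  intro o ho hxo
  obtain ⟨s, ⟨hs𝓝, hscl⟩, hso⟩ := (closed_nhds_basis x).mem_iff.mp (ho.mem_nhds hxo)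
  set V := interior s with hV
  have hxV : x ∈ V := mem_interior_iff_mem_nhds.mpr hs𝓝
  have hclV : closure V ⊆ s := by
    calc closure V ⊆ closure s := closure_mono interior_subset
    _ = s := hscl.closure_eq
  obtain ⟨K, hK⟩ := hx V isOpen_interior hxV
  have hcov : orbitE f.toEquiv x ⊆
      ⋃ j ∈ Finset.range (K + 1), (zpowH f (-(j : ℤ))) '' V := by
    rintro _ ⟨n, rfl⟩
    obtain ⟨m, hmV, hnm, hmK⟩ := hK n
    have hj : (m - n).toNat ∈ Finset.range (K + 1) := by
      rw [Finset.mem_range]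
      omega
    refine mem_biUnion hj ⟨(f.toEquiv ^ m) x, hmV, ?_⟩
    have h1 : ((m - n).toNat : ℤ) = m - n := by omega
    rw [zpowH_apply, h1, ← Equiv.Perm.mul_apply, ← zpow_add]
    ring_nf
  have hy2 : y ∈ ⋃ j ∈ Finset.range (K + 1), (zpowH f (-(j : ℤ))) '' closure V := by
    have := (closure_mono hcov) hy
    rw [Finset.closure_biUnion] at this
    refine Set.mem_of_subset_of_mem ?_ this
    refine Set.iUnion₂_mono fun j hj => ?_
    rw [(zpowH f (-(j : ℤ))).image_closure]
  obtain ⟨j, -, w, hw, hwy⟩ := by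
    simpa only [Set.mem_iUnion, exists_prop] using hy2
  refine ⟨(f.toEquiv ^ (j : ℤ)) y, ?_, mem_orbitE _ y⟩
  have : (f.toEquiv ^ (j : ℤ)) y = w := by
    rw [← hwy, zpowH_apply, ← Equiv.Perm.mul_apply, ← zpow_add]
    simp
  rw [this]
  exact hso (hclV hw)

end Aux

theorem stmt_5 {X : Type*} [TopologicalSpace X] [CompactSpace X]
    [TopologicalSpace.MetrizableSpace X] (f : X ≃ₜ X) (k : ℕ) (hk : 0 < k)
    (hap : ∀ x : X, AlmostPeriodicPt f.toEquiv x) :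
    ∀ x : X, AlmostPeriodicPt (f.toEquiv ^ k) x := by
  intro x U hU hxU
  set e := f.toEquiv with he
  set g := zpowH f (k : ℤ) with hgdef
  have hg : g.toEquiv = e ^ (k : ℤ) := rfl
  have hgp : ∀ n : ℤ, g.toEquiv ^ n = e ^ ((k : ℤ) * n) := fun n => by rw [hg, ← zpow_mul]
  have key : ∀ n : ℤ, (e ^ k) ^ n = g.toEquiv ^ n := fun n => by
    rw [hg, zpow_natCast]
  -- Step A: a minimal invariant subset of the g-orbit closure of x
  obtain ⟨N, hNmin⟩ := exists_minimal_invSet g x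
  obtain ⟨hNM, ⟨y0, hy0N⟩, hNcl, hNinv⟩ := hNmin.prop
  -- Step B: A := union of the f-translates of N
  set A := ⋃ r ∈ Finset.range k, (zpowH f (r : ℤ)) '' N with hAdef
  have hAclosed : IsClosed A := by
    refine Set.Finite.isClosed_biUnion (Finset.finite_toSet _) fun r _ => ?_
    exact (zpowH f (r : ℤ)).isClosedMap _ hNcl
  have hy0A : y0 ∈ A := by
    refine mem_biUnion (Finset.mem_range.mpr hk) ⟨y0, hy0N, ?_⟩
    simp
  have hAinv : ∀ z ∈ A, ∀ n : ℤ, (e ^ n) z ∈ A := by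
    intro z hz n
    rw [hAdef, Set.mem_iUnion₂] at hz
    obtain ⟨r, hr, w, hwN, rfl⟩ := hz
    rw [Finset.mem_range] at hr
    set q := (n + r) / (k : ℤ) with hq
    set r' := (n + r) % (k : ℤ) with hr'
    have hr'0 : 0 ≤ r' := Int.emod_nonneg _ (by exact_mod_cast hk.ne')
    have hr'k : r' < k := Int.emod_lt_of_pos _ (by exact_mod_cast hk)
    have hsum : r' + (k : ℤ) * q = n + r := Int.emod_add_mul_ediv _ _
    have hcomp : (e ^ n) ((zpowH f (r : ℤ)) w) = (e ^ r') ((g.toEquiv ^ q) w) := by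
      rw [zpowH_apply, hgp, ← Equiv.Perm.mul_apply, ← Equiv.Perm.mul_apply,
        ← zpow_add, ← zpow_add, hsum]
    rw [hcomp]
    have hmem : (r'.toNat : ℤ) = r' := Int.toNat_of_nonneg hr'0
    have hin : (e ^ r') ((g.toEquiv ^ q) w) ∈ (zpowH f (r'.toNat : ℤ)) '' N := by
      refine ⟨(g.toEquiv ^ q) w, hNinv w hwN q, ?_⟩
      rw [zpowH_apply, hmem]
    exact mem_biUnion (Finset.mem_range.mpr (by omega : r'.toNat < k)) hin
  -- Step C: x belongs to A
  have horb_sub : orbitE g.toEquiv x ⊆ orbitE e x := by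
    rintro _ ⟨n, rfl⟩
    show (g.toEquiv ^ n) x ∈ orbitE e x
    rw [hgp]
    exact mem_orbitE _ x
  have hy0e : y0 ∈ closure (orbitE e x) := closure_mono horb_sub (hNM hy0N)
  have hxorb : x ∈ closure (orbitE e y0) := mem_closure_orbit_of_ap f (hap x) hy0e
  have hxA : x ∈ A := closure_orbitE_subset f hAclosed hAinv hy0A hxorb
  rw [hAdef, Set.mem_iUnion₂] at hxA
  obtain ⟨r, hrk, n0, hn0N, hn0x⟩ := hxA
  rw [Finset.mem_range] at hrk
  -- Step D: N' := e^r '' N contains x, is closed, g-invariant and minimal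
  set N' := (zpowH f (r : ℤ)) '' N with hN'def
  have hN'cl : IsClosed N' := (zpowH f (r : ℤ)).isClosedMap _ hNcl
  have hxN' : x ∈ N' := ⟨n0, hn0N, hn0x⟩
  have hcommute : ∀ (n : ℤ) (w : X),
      (g.toEquiv ^ n) ((zpowH f (r : ℤ)) w) = (zpowH f (r : ℤ)) ((g.toEquiv ^ n) w) := by
    intro n w
    rw [zpowH_apply, zpowH_apply, hgp, ← Equiv.Perm.mul_apply, ← Equiv.Perm.mul_apply,
      ← zpow_add, ← zpow_add, add_comm]
  have hN'inv : ∀ z ∈ N', ∀ n : ℤ, (g.toEquiv ^ n) z ∈ N' := by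
    rintro _ ⟨w, hwN, rfl⟩ n
    rw [hcommute]
    exact ⟨(g.toEquiv ^ n) w, hNinv w hwN n, rfl⟩
  have hN'min : ∀ B, B ⊆ N' → B.Nonempty → IsClosed B →
      (∀ z ∈ B, ∀ n : ℤ, (g.toEquiv ^ n) z ∈ B) → B = N' := by
    intro B hBN' hBne hBcl hBinv
    set B0 := (zpowH f (r : ℤ)).symm '' B with hB0def
    have hrev : ∀ z, (zpowH f (r : ℤ)) ((zpowH f (r : ℤ)).symm z) = z := fun z =>
      (zpowH f (r : ℤ)).apply_symm_apply z
    have hB0N : B0 ⊆ N := by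
      rintro _ ⟨z, hzB, rfl⟩
      obtain ⟨w, hwN, rfl⟩ := hBN' hzB
      rwa [Homeomorph.symm_apply_apply]
    have hB0inv : ∀ z ∈ B0, ∀ n : ℤ, (g.toEquiv ^ n) z ∈ B0 := by
      rintro _ ⟨z, hzB, rfl⟩ n
      refine ⟨(g.toEquiv ^ n) z, hBinv z hzB n, ?_⟩
      apply (zpowH f (r : ℤ)).injective
      rw [hrev, ← hcommute, hrev]
    have hB0mem : B0 ∈ invSets g (closure (orbitE g.toEquiv x)) := by
      refine ⟨hB0N.trans hNM, hBne.image _, ?_, hB0inv⟩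
      exact (zpowH f (r : ℤ)).symm.isClosedMap _ hBcl
    have hNB0 : N ⊆ B0 := hNmin.2 hB0mem hB0N
    have hB0N' : B0 = N := le_antisymm hB0N hNB0
    calc B = (zpowH f (r : ℤ)) '' B0 := by
          rw [hB0def, ← Set.image_comp]
          simp [Function.comp_def, hrev]
      _ = N' := by rw [hB0N']
  -- Step E: every point of the g-orbit closure of x has x in its g-orbit closure
  set Mx := closure (orbitE g.toEquiv x) with hMxdef
  have hMxN' : Mx ⊆ N' := closure_orbitE_subset g hN'cl hN'inv hxN'
  have hE : ∀ y ∈ Mx, x ∈ closure (orbitE g.toEquiv y) := by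
    intro y hy
    have hyN' : y ∈ N' := hMxN' hy
    have hB : closure (orbitE g.toEquiv y) = N' := by
      refine hN'min _ (closure_orbitE_subset g hN'cl hN'inv hyN')
        ⟨y, subset_closure (self_mem_orbitE y)⟩ isClosed_closure ?_
      intro z hz n
      exact zpow_mem_closure_orbitE g n hz
    rw [hB]
    exact hxN'
  -- Step F: compactness gives syndeticity
  have hcov : Mx ⊆ ⋃ n : ℤ, (fun z => (g.toEquiv ^ n) z) ⁻¹' U := by
    intro y hy
    have := hE y hy
    rw [mem_closure_iff] at this
    obtain ⟨_, hzU, ⟨n, rfl⟩⟩ := this U hU hxU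
    exact Set.mem_iUnion.mpr ⟨n, hzU⟩
  obtain ⟨t, ht⟩ := (isClosed_closure (s := orbitE g.toEquiv x)).isCompact.elim_finite_subcover
    (fun n : ℤ => (fun z => (g.toEquiv ^ n) z) ⁻¹' U)
    (fun n => hU.preimage (cont_zpow g n)) hcov
  have hxMx : x ∈ Mx := subset_closure (self_mem_orbitE x)
  have htne : t.Nonempty := by
    have := ht hxMx
    rw [Set.mem_iUnion₂] at this
    obtain ⟨n, hn, -⟩ := this
    exact ⟨n, hn⟩
  set a := t.min' htne with ha
  set b := t.max' htne with hb
  refine ⟨(b - a).toNat, ?_⟩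
  intro n
  have hz : (g.toEquiv ^ (n - a)) x ∈ Mx := zpow_mem_closure_orbitE g _ hxMx
  have hz2 := ht hz
  rw [Set.mem_iUnion₂] at hz2
  obtain ⟨j, hjt, hjU⟩ := hz2
  rw [Set.mem_preimage] at hjU
  have hja : a ≤ j := t.min'_le j hjt
  have hjb : j ≤ b := t.le_max' j hjt
  have hab : a ≤ b := hja.trans hjb
  refine ⟨j + (n - a), ?_, by omega, by omega⟩
  show ((e ^ k) ^ (j + (n - a))) x ∈ U
  rw [key, zpow_add, Equiv.Perm.mul_apply]
  exact hjU
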